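/- Under the hypotheses ∑_{i=1}^k f_i^k = F, f_i^k ≥ 0, f_i^k ≥ f_i^{k+1} for all i < k, and f_k^k ≥ f_k^{k+1} + f_{k+1}^{k+1} for all k ≥ 1, one can deduce the generalized Sybil-proofness: for all k ≥ 1 and s ≥ 1, f_k^k ≥ f_{k+s}^{k+s} + ∑_{i=0}^{s−1} f_{k+i}^{k+s}. -/

import Mathlib

theorem stmt_10 (F : ℝ) (hF : 0 < F) (f : ℕ → ℕ → ℝ)
    (hsum : ∀ k : ℕ, 1 ≤ k → ∑ i ∈ Finset.Icc 1 k, f k i = F)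
    (hnonneg : ∀ k i : ℕ, 0 ≤ f k i)
    (hperm : ∀ k i : ℕ, 1 ≤ i → i < k → f k i ≥ f (k + 1) i)
    (hsybil : ∀ k : ℕ, 1 ≤ k → f k k ≥ f (k + 1) k + f (k + 1) (k + 1)) :
    ∀ k : ℕ, 1 ≤ k → ∀ s : ℕ, 1 ≤ s →
      f k k ≥ f (k + s) (k + s) + ∑ i ∈ Finset.range s, f (k + s) (k + i) := by
  intro k hk s hs
  induction s with
  | zero => omega
  | succ s ih =>
    rcases Nat.eq_zero_or_pos s with rfl | hs'
    · simpa [add_comm] using hsybil k hk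
    · have IH := ih hs'
      have hsyb := hsybil (k + s) (by omega)
      have hstep : ∑ i ∈ Finset.range s, f (k + s) (k + i) ≥
          ∑ i ∈ Finset.range s, f (k + s + 1) (k + i) :=
        Finset.sum_le_sum fun i hi => by
          have hi' : i < s := Finset.mem_range.mp hi
          exact hperm (k + s) (k + i) (by omega) (by omega)
      have hsum' : ∑ i ∈ Finset.range (s + 1), f (k + (s + 1)) (k + i) =
          ∑ i ∈ Finset.range s, f (k + s + 1) (k + i) + f (k + s + 1) (k + s) := by
        rw [Finset.sum_range_succ]
        ring_nf
      have : k + (s + 1) = k + s + 1 := by ring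
      rw [hsum', this]
      linarith
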